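/- A C*-category C is full (i.e. each hom-bimodule C(B,A) is an imprimitivity bimodule over the unital C*-algebras C(A,A) and C(B,B)) if and only if for all objects A, B, C, the closure of the span of composites C(B,A)∘C(C,B) equals C(C,A). -/
import Mathlib


/-- A (unital) C*-category with object type `Obj` and hom-spaces `Hom A B`
(morphisms from `A` to `B`, composition written diagrammatically): each hom-set is a
complex Banach space, composition is bilinear and submultiplicative, and there is an
antilinear involutive contravariant `*`-operation with the C*-property
`‖x*∘x‖ = ‖x‖²` and `x*∘x` positive in the C*-algebra `Hom A A`. -/
structure CStarCategoryStruct (Obj : Type*) (Hom : Obj → Obj → Type*)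
    [∀ A B, NormedAddCommGroup (Hom A B)] [∀ A B, Module ℂ (Hom A B)] where
  comp : ∀ {A B C : Obj}, Hom A B → Hom B C → Hom A C
  id : ∀ A : Obj, Hom A A
  star' : ∀ {A B : Obj}, Hom A B → Hom B A
  comp_assoc : ∀ {A B C D : Obj} (x : Hom A B) (y : Hom B C) (z : Hom C D),
    comp (comp x y) z = comp x (comp y z)
  id_comp : ∀ {A B : Obj} (x : Hom A B), comp (id A) x = x
  comp_id : ∀ {A B : Obj} (x : Hom A B), comp x (id B) = x
  comp_add : ∀ {A B C : Obj} (x : Hom A B) (y z : Hom B C),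
    comp x (y + z) = comp x y + comp x z
  add_comp : ∀ {A B C : Obj} (x y : Hom A B) (z : Hom B C),
    comp (x + y) z = comp x z + comp y z
  comp_smul : ∀ {A B C : Obj} (c : ℂ) (x : Hom A B) (y : Hom B C),
    comp x (c • y) = c • comp x y
  smul_comp : ∀ {A B C : Obj} (c : ℂ) (x : Hom A B) (y : Hom B C),
    comp (c • x) y = c • comp x y
  norm_comp_le : ∀ {A B C : Obj} (x : Hom A B) (y : Hom B C),
    ‖comp x y‖ ≤ ‖x‖ * ‖y‖
  star_star : ∀ {A B : Obj} (x : Hom A B), star' (star' x) = x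
  star_comp : ∀ {A B C : Obj} (x : Hom A B) (y : Hom B C),
    star' (comp x y) = comp (star' y) (star' x)
  star_add : ∀ {A B : Obj} (x y : Hom A B), star' (x + y) = star' x + star' y
  star_smul : ∀ {A B : Obj} (c : ℂ) (x : Hom A B),
    star' (c • x) = (starRingEnd ℂ c) • star' x
  norm_star_comp_self : ∀ {A B : Obj} (x : Hom A B), ‖comp (star' x) x‖ = ‖x‖ ^ 2
  star_comp_self_pos : ∀ {A B : Obj} (x : Hom A B),
    ∃ y : Hom B B, comp (star' x) x = comp (star' y) y
  complete : ∀ A B : Obj, CompleteSpace (Hom A B)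

variable {Obj : Type*} {Hom : Obj → Obj → Type*}
  [∀ A B, NormedAddCommGroup (Hom A B)] [∀ A B, Module ℂ (Hom A B)]

/-- A C*-category is *full* if every hom-bimodule `Hom A B` is an imprimitivity
bimodule over the unital C*-algebras `Hom A A` and `Hom B B`, i.e. it is full both
as a right Hilbert `Hom B B`-module (inner product `⟨x,y⟩ = x*∘y`) and as a left
Hilbert `Hom A A`-module (inner product `⟨x,y⟩ = x∘y*`); the imprimitivity
condition holds automatically by associativity. -/
def CStarCategoryStruct.IsFull (C : CStarCategoryStruct Obj Hom) : Prop :=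
  ∀ A B : Obj,
    closure (Submodule.span ℂ
        {b : Hom B B | ∃ x y : Hom A B, b = C.comp (C.star' x) y} : Set (Hom B B))
      = Set.univ ∧
    closure (Submodule.span ℂ
        {a : Hom A A | ∃ x y : Hom A B, a = C.comp x (C.star' y)} : Set (Hom A A))
      = Set.univ

/-- A C*-category is full if and only if for all objects `A`, `B`, `C` the closed
linear span of the composites of morphisms `A → B` with morphisms `B → C` is the
whole space of morphisms `A → C`. -/
theorem isFull_iff_comp_dense (C : CStarCategoryStruct Obj Hom) :
    C.IsFull ↔
      ∀ A B C' : Obj,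
        closure (Submodule.span ℂ
            {z : Hom A C' | ∃ (x : Hom A B) (y : Hom B C'), z = C.comp x y} :
          Set (Hom A C')) = Set.univ := by

  constructor
  · intro hF A B C'
    rw [Set.eq_univ_iff_forall]
    intro z
    obtain ⟨-, h2⟩ := hF A B
    set S : Set (Hom A A) := {a : Hom A A | ∃ x y : Hom A B, a = C.comp x (C.star' y)}
    set T : Set (Hom A C') :=
      {w : Hom A C' | ∃ (x : Hom A B) (y : Hom B C'), w = C.comp x y}
    let g : Hom A A →ₗ[ℂ] Hom A C' :=
      { toFun := fun a => C.comp a z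
        map_add' := fun a b => C.add_comp a b z
        map_smul' := fun c a => C.smul_comp c a z }
    let f : Hom A A →L[ℂ] Hom A C' :=
      g.mkContinuous ‖z‖ (fun a => le_of_le_of_eq (C.norm_comp_le a z) (mul_comm _ _))
    have hid : C.id A ∈ closure ((Submodule.span ℂ S : Submodule ℂ (Hom A A)) : Set (Hom A A)) := by
      rw [h2]; trivial
    have hz : z = f (C.id A) := (C.id_comp z).symm
    have h1 : f (C.id A) ∈ closure (f '' ((Submodule.span ℂ S : Submodule ℂ (Hom A A)) : Set (Hom A A))) :=
      image_closure_subset_closure_image f.continuous ⟨_, hid, rfl⟩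
    have h2' : f '' ((Submodule.span ℂ S : Submodule ℂ (Hom A A)) : Set (Hom A A))
        ⊆ (Submodule.span ℂ T : Set (Hom A C')) := by
      have : Submodule.map (f : Hom A A →ₗ[ℂ] Hom A C') (Submodule.span ℂ S)
          = Submodule.span ℂ (f '' S) := Submodule.map_span _ _
      intro w hw
      have hw' : w ∈ Submodule.span ℂ (f '' S) := by
        rw [← this]; exact Submodule.mem_map.2 (by rcases hw with ⟨a, ha, rfl⟩; exact ⟨a, ha, rfl⟩)
      refine Submodule.span_mono ?_ hw'
      rintro _ ⟨a, ⟨x, y, rfl⟩, rfl⟩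
      exact ⟨x, C.comp (C.star' y) z, C.comp_assoc x (C.star' y) z⟩
    rw [hz]
    exact closure_mono h2' h1
  · intro h A B
    constructor
    · have hset : {b : Hom B B | ∃ x y : Hom A B, b = C.comp (C.star' x) y}
          = {z : Hom B B | ∃ (x : Hom B A) (y : Hom A B), z = C.comp x y} := by
        ext b
        constructor
        · rintro ⟨x, y, rfl⟩; exact ⟨C.star' x, y, rfl⟩
        · rintro ⟨x, y, rfl⟩; exact ⟨C.star' x, y, by rw [C.star_star]⟩
      rw [hset]; exact h B A B
    · have hset : {a : Hom A A | ∃ x y : Hom A B, a = C.comp x (C.star' y)}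
          = {z : Hom A A | ∃ (x : Hom A B) (y : Hom B A), z = C.comp x y} := by
        ext a
        constructor
        · rintro ⟨x, y, rfl⟩; exact ⟨x, C.star' y, rfl⟩
        · rintro ⟨x, y, rfl⟩; exact ⟨x, C.star' y, by rw [C.star_star]⟩
      rw [hset]; exact h A B A
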